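/- Let ρ₀ and ρ₁ be density matrices with supp(ρ₁) ⊆ supp(ρ₀), ρ₀ positive definite, and let 0 ≤ α ≤ 1. Define ρ_α = (1−α)ρ₀ + α ρ₁. Then D(ρ_α ‖ ρ₀) ≤ α² χ²(ρ₁‖ρ₀), where χ²(ρ₁‖ρ₀) = Tr((ρ₁−ρ₀)² ρ₀^{-1}). -/

import Mathlib

open Matrix
open scoped ComplexOrder

variable {d : Type*} [Fintype d] [DecidableEq d]

open Classical in
/-- Functional calculus for Hermitian matrices: apply `f` to the eigenvalues.
Returns `0` if the matrix is not Hermitian. -/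
noncomputable def mfun (f : ℝ → ℝ) (A : Matrix d d ℂ) : Matrix d d ℂ :=
  if hA : A.IsHermitian then
    (hA.eigenvectorUnitary : Matrix d d ℂ) *
      Matrix.diagonal (fun i => (f (hA.eigenvalues i) : ℂ)) *
      star (hA.eigenvectorUnitary : Matrix d d ℂ)
  else 0

/-- Matrix logarithm on the support (eigenvalues `≤ 0` are mapped to `0`). -/
noncomputable def logm (A : Matrix d d ℂ) : Matrix d d ℂ :=
  mfun (fun x => if x ≤ 0 then 0 else Real.log x) A

/-- Matrix real power on the support (eigenvalues `≤ 0` are mapped to `0`). -/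
noncomputable def powm (A : Matrix d d ℂ) (p : ℝ) : Matrix d d ℂ :=
  mfun (fun x => if x ≤ 0 then 0 else x ^ p) A

/-- Quantum relative entropy `D(ρ‖σ) = Tr(ρ (log ρ − log σ))` (natural log). -/
noncomputable def qRelEnt (ρ σ : Matrix d d ℂ) : ℝ :=
  ((ρ * (logm ρ - logm σ)).trace).re

/-- The support of `ρ` is contained in the support of `σ` (kernel containment,
equivalent to range containment for Hermitian matrices). -/
def SuppSubset (ρ σ : Matrix d d ℂ) : Prop :=
  ∀ v : d → ℂ, σ.mulVec v = 0 → ρ.mulVec v = 0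

/-- Trace norm of a Hermitian matrix: `Tr |A|`. -/
noncomputable def traceNorm (A : Matrix d d ℂ) : ℝ :=
  ((mfun (fun x => |x|) A).trace).re

section Aux

variable {A B : Matrix d d ℂ}

lemma mfun_eq (hA : A.IsHermitian) (f : ℝ → ℝ) :
    mfun f A = (hA.eigenvectorUnitary : Matrix d d ℂ) *
      Matrix.diagonal (fun i => (f (hA.eigenvalues i) : ℂ)) *
      star (hA.eigenvectorUnitary : Matrix d d ℂ) := dif_pos hA

lemma star_mul_self_eigU (hA : A.IsHermitian) :
    star (hA.eigenvectorUnitary : Matrix d d ℂ) * (hA.eigenvectorUnitary : Matrix d d ℂ) = 1 :=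
  mem_unitaryGroup_iff'.mp hA.eigenvectorUnitary.2

lemma mul_star_self_eigU (hA : A.IsHermitian) :
    (hA.eigenvectorUnitary : Matrix d d ℂ) * star (hA.eigenvectorUnitary : Matrix d d ℂ) = 1 :=
  mem_unitaryGroup_iff.mp hA.eigenvectorUnitary.2

lemma mfun_mul_mfun (hA : A.IsHermitian) (f g : ℝ → ℝ) :
    mfun f A * mfun g A = mfun (fun x => f x * g x) A := by
  rw [mfun_eq hA f, mfun_eq hA g, mfun_eq hA]
  set U := (hA.eigenvectorUnitary : Matrix d d ℂ) with hU
  calc (U * Matrix.diagonal (fun i => (f (hA.eigenvalues i) : ℂ)) * star U) *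
        (U * Matrix.diagonal (fun i => (g (hA.eigenvalues i) : ℂ)) * star U)
      = U * (Matrix.diagonal (fun i => (f (hA.eigenvalues i) : ℂ)) * (star U * U) *
          Matrix.diagonal (fun i => (g (hA.eigenvalues i) : ℂ))) * star U := by
        simp only [Matrix.mul_assoc]
    _ = U * Matrix.diagonal (fun i => ((f (hA.eigenvalues i) * g (hA.eigenvalues i) : ℝ) : ℂ)) * star U := by
        rw [star_mul_self_eigU hA, Matrix.mul_one, Matrix.diagonal_mul_diagonal]
        push_cast
        rw [Matrix.mul_assoc]

lemma trace_mfun (hA : A.IsHermitian) (f : ℝ → ℝ) :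
    (mfun f A).trace = ∑ i, (f (hA.eigenvalues i) : ℂ) := by
  rw [mfun_eq hA, Matrix.trace_mul_cycle, star_mul_self_eigU hA, Matrix.one_mul,
    Matrix.trace_diagonal]

lemma mfun_id (hA : A.IsHermitian) : mfun (fun x : ℝ => x) A = A := by
  rw [mfun_eq hA]
  exact hA.spectral_theorem.symm

lemma inv_eq_mfun (hB : B.PosDef) : B⁻¹ = mfun (fun x => x⁻¹) B := by
  apply Matrix.inv_eq_right_inv
  nth_rewrite 1 [← mfun_id hB.1]
  rw [mfun_mul_mfun hB.1]
  have h : ∀ i, hB.1.eigenvalues i * (hB.1.eigenvalues i)⁻¹ = 1 := fun i =>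
    mul_inv_cancel₀ (hB.eigenvalues_pos i).ne'
  rw [mfun_eq hB.1]
  simp only [h]
  simp [mul_star_self_eigU hB.1]

lemma re_trace_mfun_mul_mfun (hA : A.IsHermitian) (hB : B.IsHermitian) (f g : ℝ → ℝ) :
    ((mfun f A * mfun g B).trace).re =
      ∑ i, ∑ j, f (hA.eigenvalues i) * g (hB.eigenvalues j) *
        Complex.normSq ((star (hA.eigenvectorUnitary : Matrix d d ℂ) *
          (hB.eigenvectorUnitary : Matrix d d ℂ)) i j) := by
  set U := (hA.eigenvectorUnitary : Matrix d d ℂ)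
  set V := (hB.eigenvectorUnitary : Matrix d d ℂ)
  set W := star U * V with hW
  set Df := Matrix.diagonal (fun i => (f (hA.eigenvalues i) : ℂ)) with hDf
  set Dg := Matrix.diagonal (fun j => (g (hB.eigenvalues j) : ℂ)) with hDg
  have key : mfun f A * mfun g B = U * (Df * W * Dg * star W) * star U := by
    rw [mfun_eq hA, mfun_eq hB]
    simp only [hW, hDf, hDg, Matrix.star_mul, star_star, Matrix.mul_assoc,
      mul_star_self_eigU hA, mul_star_self_eigU hB, Matrix.mul_one]
    simp only [U, V, mul_star_self_eigU hA, Matrix.mul_one]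
  have htr : (mfun f A * mfun g B).trace = (Df * W * Dg * star W).trace := by
    rw [key, Matrix.trace_mul_cycle, ← Matrix.mul_assoc, star_mul_self_eigU hA, Matrix.one_mul]
  rw [htr]
  have hmain : (Df * W * Dg * star W).trace =
      ∑ i, ∑ j, ((f (hA.eigenvalues i) * g (hB.eigenvalues j) *
        Complex.normSq (W i j) : ℝ) : ℂ) := by
    rw [Matrix.trace]
    congr 1
    funext i
    rw [Matrix.diag_apply, Matrix.mul_apply]
    congr 1
    funext j
    rw [Matrix.mul_apply]
    rw [Finset.sum_eq_single j]
    · simp only [hDf, hDg, Matrix.mul_diagonal, Matrix.diagonal_mul,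
        Matrix.diagonal_apply_eq, Matrix.star_apply, Complex.star_def]
      push_cast
      linear_combination ((f (hA.eigenvalues i) : ℂ) * (g (hB.eigenvalues j) : ℂ)) *
        Complex.mul_conj (W i j)
    · intro k _ hk
      simp [hDf, hDg, Matrix.mul_diagonal, Matrix.diagonal_apply_ne _ hk]
    · intro h; exact absurd (Finset.mem_univ j) h
  rw [hmain]
  push_cast
  simp

lemma sum_normSq_row (hA : A.IsHermitian) (hB : B.IsHermitian) (i : d) :
    ∑ j, Complex.normSq ((star (hA.eigenvectorUnitary : Matrix d d ℂ) *
      (hB.eigenvectorUnitary : Matrix d d ℂ)) i j) = 1 := by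
  set U := (hA.eigenvectorUnitary : Matrix d d ℂ)
  set V := (hB.eigenvectorUnitary : Matrix d d ℂ)
  set W := star U * V with hW
  have hWW : W * star W = 1 := by
    rw [hW, Matrix.star_mul, star_star, Matrix.mul_assoc, ← Matrix.mul_assoc V,
      mul_star_self_eigU hB, Matrix.one_mul, star_mul_self_eigU hA]
  have h1 : (W * star W) i i = 1 := by rw [hWW]; simp
  rw [Matrix.mul_apply] at h1
  simp only [Matrix.star_apply, Complex.star_def, Complex.mul_conj] at h1
  exact_mod_cast h1

lemma sum_normSq_col (hA : A.IsHermitian) (hB : B.IsHermitian) (j : d) :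
    ∑ i, Complex.normSq ((star (hA.eigenvectorUnitary : Matrix d d ℂ) *
      (hB.eigenvectorUnitary : Matrix d d ℂ)) i j) = 1 := by
  set U := (hA.eigenvectorUnitary : Matrix d d ℂ)
  set V := (hB.eigenvectorUnitary : Matrix d d ℂ)
  set W := star U * V with hW
  have hWW : star W * W = 1 := by
    rw [hW, Matrix.star_mul, star_star, Matrix.mul_assoc, ← Matrix.mul_assoc U,
      mul_star_self_eigU hA, Matrix.one_mul, star_mul_self_eigU hB]
  have h1 : (star W * W) j j = 1 := by rw [hWW]; simp
  rw [Matrix.mul_apply] at h1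
  have h2 : ∀ i, (star W) j i * W i j = ((Complex.normSq (W i j) : ℝ) : ℂ) := by
    intro i
    rw [Matrix.star_apply, Complex.star_def, mul_comm, Complex.mul_conj]
  simp only [h2] at h1
  exact_mod_cast h1

lemma sum_eigenvalues_eq_one (hA : A.IsHermitian) (h1 : A.trace = 1) :
    ∑ i, hA.eigenvalues i = 1 := by
  have h := trace_mfun hA (fun x => x)
  rw [mfun_id hA, h1] at h
  have h' := congrArg Complex.re h.symm
  simpa using h'

lemma scalar_log_bound {a b : ℝ} (ha : 0 ≤ a) (hb : 0 < b) :
    a * (if a ≤ 0 then 0 else Real.log a) - a * (if b ≤ 0 then 0 else Real.log b)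
      ≤ a * a * b⁻¹ - a := by
  rw [if_neg (not_le.mpr hb)]
  rcases eq_or_lt_of_le ha with h|h
  · rw [← h]
    simp
  · rw [if_neg (not_le.mpr h)]
    have hlog : Real.log a - Real.log b ≤ a / b - 1 := by
      rw [← Real.log_div h.ne' hb.ne']
      exact Real.log_le_sub_one_of_pos (div_pos h hb)
    have h2 := mul_le_mul_of_nonneg_left hlog ha
    calc a * Real.log a - a * Real.log b = a * (Real.log a - Real.log b) := by ring
      _ ≤ a * (a / b - 1) := h2
      _ = a * a * b⁻¹ - a := by field_simp

set_option maxHeartbeats 1000000 in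
theorem qRelEnt_mix_le_sq_mul_chiSq' (ρ₀ ρ₁ : Matrix d d ℂ)
    (h₀ : ρ₀.PosDef) (h₀1 : ρ₀.trace = 1)
    (h₁ : ρ₁.PosSemidef) (h₁1 : ρ₁.trace = 1)
    (α : ℝ) (hα0 : 0 ≤ α) (hα1 : α ≤ 1) :
    (((((1 - α) • ρ₀ + α • ρ₁) * (mfun (fun x => if x ≤ 0 then 0 else Real.log x) ((1 - α) • ρ₀ + α • ρ₁) - mfun (fun x => if x ≤ 0 then 0 else Real.log x) ρ₀)).trace).re) ≤
      α ^ 2 * (((ρ₁ - ρ₀) * (ρ₁ - ρ₀) * ρ₀⁻¹).trace).re := by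
  set ℓ : ℝ → ℝ := fun x => if x ≤ 0 then 0 else Real.log x with hℓ
  set A := (1 - α) • ρ₀ + α • ρ₁ with hAdef
  set B := ρ₀ with hBdef
  have hB : B.IsHermitian := h₀.1
  -- A is PSD
  have hAps : A.PosSemidef := by
    constructor
    · rw [hAdef, Matrix.IsHermitian]
      rw [conjTranspose_add, conjTranspose_smul, conjTranspose_smul]
      rw [h₀.1, h₁.1]
      simp
    · exact ((h₀.posSemidef.smul (by linarith : (0:ℝ) ≤ 1 - α)).add (h₁.smul hα0)).2
  have hA : A.IsHermitian := hAps.1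
  have hAtr : A.trace = 1 := by
    rw [hAdef, Matrix.trace_add, Matrix.trace_smul, Matrix.trace_smul, h₀1, h₁1]
    simp [Complex.real_smul]
  -- eigen data
  set a : d → ℝ := hA.eigenvalues with ha
  set b : d → ℝ := hB.eigenvalues with hb
  set T : d → d → ℝ := fun i j => Complex.normSq ((star (hA.eigenvectorUnitary : Matrix d d ℂ) *
    (hB.eigenvectorUnitary : Matrix d d ℂ)) i j) with hT
  have ha0 : ∀ i, 0 ≤ a i := hAps.eigenvalues_nonneg
  have hb0 : ∀ j, 0 < b j := h₀.eigenvalues_pos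
  have hT0 : ∀ i j, 0 ≤ T i j := fun i j => Complex.normSq_nonneg _
  have hrow : ∀ i, ∑ j, T i j = 1 := sum_normSq_row hA hB
  have hsa : ∑ i, a i = 1 := sum_eigenvalues_eq_one hA hAtr
  -- E1
  have e1 : ((A * mfun ℓ A).trace).re = ∑ i, a i * ℓ (a i) := by
    nth_rewrite 1 [← mfun_id hA]
    rw [mfun_mul_mfun hA, trace_mfun hA]
    push_cast
    simp
    rfl
  -- E2
  have e2 : ((A * mfun ℓ B).trace).re = ∑ i, ∑ j, a i * ℓ (b j) * T i j := by
    nth_rewrite 1 [← mfun_id hA]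
    exact re_trace_mfun_mul_mfun hA hB _ _
  -- E3
  have e3 : ((A * A * B⁻¹).trace).re = ∑ i, ∑ j, a i * a i * (b j)⁻¹ * T i j := by
    have hAA : A * A = mfun (fun x => x * x) A := by
      conv_lhs => rw [← mfun_id hA]
      exact mfun_mul_mfun hA _ _
    rw [hAA, inv_eq_mfun h₀, re_trace_mfun_mul_mfun hA hB]
  -- E5 : trace of (A-B)^2 B⁻¹
  have hdet : IsUnit B.det := h₀.det_pos.ne'.isUnit
  have hBBinv : B * B⁻¹ = 1 := Matrix.mul_nonsing_inv _ hdet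
  have hBinvB : B⁻¹ * B = 1 := Matrix.nonsing_inv_mul _ hdet
  have e5 : (((A - B) * (A - B) * B⁻¹).trace).re = ((A * A * B⁻¹).trace).re - 1 := by
    have hexp : (A - B) * (A - B) * B⁻¹ =
        A * A * B⁻¹ - A * (B * B⁻¹) - B * A * B⁻¹ + B * (B * B⁻¹) := by
      noncomm_ring
    rw [hexp, hBBinv, Matrix.mul_one, Matrix.mul_one]
    have hcyc : (B * A * B⁻¹).trace = A.trace := by
      rw [Matrix.trace_mul_cycle, hBinvB, Matrix.one_mul]
    rw [Matrix.trace_add, Matrix.trace_sub, Matrix.trace_sub, hcyc, hAtr, h₀1]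
    simp
  -- E6/E7 : relation to α² χ²
  have e6 : A - B = α • (ρ₁ - ρ₀) := by
    rw [hAdef, hBdef]
    module
  have e7 : (((A - B) * (A - B) * B⁻¹).trace).re =
      α ^ 2 * (((ρ₁ - ρ₀) * (ρ₁ - ρ₀) * ρ₀⁻¹).trace).re := by
    rw [e6, Matrix.smul_mul, Matrix.mul_smul, Matrix.smul_mul, Matrix.smul_mul,
      smul_smul, Matrix.trace_smul]
    rw [Complex.real_smul, Complex.re_ofReal_mul]
    rw [hBdef]
    ring
  -- assemble
  have goal_eq : ((A * (mfun ℓ A - mfun ℓ B)).trace).re =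
      (∑ i, a i * ℓ (a i)) - ∑ i, ∑ j, a i * ℓ (b j) * T i j := by
    rw [Matrix.mul_sub, Matrix.trace_sub, Complex.sub_re, e1, e2]
  rw [goal_eq, ← e7, e5, e3]
  have step1 : (∑ i, a i * ℓ (a i)) = ∑ i, ∑ j, a i * ℓ (a i) * T i j := by
    apply Finset.sum_congr rfl; intro i _
    rw [← Finset.mul_sum, hrow i, mul_one]
  rw [step1, ← Finset.sum_sub_distrib]
  have key : ∀ i, (∑ j, a i * ℓ (a i) * T i j) - (∑ j, a i * ℓ (b j) * T i j) ≤
      ∑ j, (a i * a i * (b j)⁻¹ - a i) * T i j := by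
    intro i
    rw [← Finset.sum_sub_distrib]
    apply Finset.sum_le_sum
    intro j _
    rw [← sub_mul]
    exact mul_le_mul_of_nonneg_right (scalar_log_bound (ha0 i) (hb0 j)) (hT0 i j)
  calc (∑ i, ((∑ j, a i * ℓ (a i) * T i j) - ∑ j, a i * ℓ (b j) * T i j))
      ≤ ∑ i, ∑ j, (a i * a i * (b j)⁻¹ - a i) * T i j := Finset.sum_le_sum fun i _ => key i
    _ = (∑ i, ∑ j, a i * a i * (b j)⁻¹ * T i j) - 1 := by
        have h1 : ∀ i, ∑ j, (a i * a i * (b j)⁻¹ - a i) * T i j =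
            (∑ j, a i * a i * (b j)⁻¹ * T i j) - a i := by
          intro i
          simp only [sub_mul]
          rw [Finset.sum_sub_distrib, ← Finset.mul_sum, hrow i, mul_one]
        rw [Finset.sum_congr rfl (fun i _ => h1 i), Finset.sum_sub_distrib, hsa]

end Aux

/-- For density matrices `ρ₀` (positive definite) and `ρ₁` with
`supp(ρ₁) ⊆ supp(ρ₀)`, and `0 ≤ α ≤ 1`, with `ρ_α = (1−α)ρ₀ + αρ₁`,
`D(ρ_α‖ρ₀) ≤ α² χ²(ρ₁‖ρ₀)` where `χ²(ρ₁‖ρ₀) = Tr((ρ₁−ρ₀)² ρ₀⁻¹)`. -/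
theorem qRelEnt_mix_le_sq_mul_chiSq (ρ₀ ρ₁ : Matrix d d ℂ)
    (h₀ : ρ₀.PosDef) (h₀1 : ρ₀.trace = 1)
    (h₁ : ρ₁.PosSemidef) (h₁1 : ρ₁.trace = 1)
    (hsupp : SuppSubset ρ₁ ρ₀) (α : ℝ) (hα0 : 0 ≤ α) (hα1 : α ≤ 1) :
    qRelEnt ((1 - α) • ρ₀ + α • ρ₁) ρ₀ ≤
      α ^ 2 * (((ρ₁ - ρ₀) * (ρ₁ - ρ₀) * ρ₀⁻¹).trace).re :=
  qRelEnt_mix_le_sq_mul_chiSq' ρ₀ ρ₁ h₀ h₀1 h₁ h₁1 α hα0 hα1
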